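/- For every symmetric norm ‖·‖ on ℝⁿ and every f ∈ [−1,1]ⁿ, the matrix I_{f+1} satisfies ‖I_{f+1}x‖ ≤ ‖x‖ for all x in the hyperplane 𝔛₀ = {x : ∑ᵢ xᵢ = 0}. -/

import Mathlib

open Finset

/-- The symmetric matrix `Θ_x`: off-diagonal entries `(xᵢ+xⱼ)/(2n)`, diagonal chosen
so that every row sums to zero. -/
noncomputable def Theta (n : ℕ) (x : Fin n → ℝ) : Matrix (Fin n) (Fin n) ℝ :=
  fun i j =>
    if i = j then -(∑ k ∈ Finset.univ.erase i, (x i + x k) / (2 * n))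
    else (x i + x j) / (2 * n)

/-- `I_x = Iₙ + Θ_x`. -/
noncomputable def Imat (n : ℕ) (x : Fin n → ℝ) : Matrix (Fin n) (Fin n) ℝ :=
  1 + Theta n x

/-- `E f`: the constant vector whose entries all equal the mean of `f`. -/
noncomputable def meanVec (n : ℕ) (f : Fin n → ℝ) : Fin n → ℝ :=
  fun _ => (∑ i, f i) / n

/-- The sup norm `‖x‖_∞`. -/
noncomputable def linf (n : ℕ) (x : Fin n → ℝ) : ℝ :=
  sSup (Set.range fun i => |x i|)

/-- The Ky Fan `k`-norm: the sum of the `k` largest absolute values of the entries,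
i.e. the maximum of `∑_{i ∈ S} |xᵢ|` over subsets `S` of cardinality `k`. -/
noncomputable def kyFan (n k : ℕ) (x : Fin n → ℝ) : ℝ :=
  sSup ((fun S : Finset (Fin n) => ∑ i ∈ S, |x i|) '' {S | S.card = k})

/-- The dual Ky Fan `k`-norm: `max(‖x‖_∞, ‖x‖₁ / k)`. -/
noncomputable def kyFanDual (n k : ℕ) (x : Fin n → ℝ) : ℝ :=
  max (linf n x) ((∑ i, |x i|) / k)

/-- A symmetric norm on `ℝⁿ`: a norm invariant under coordinate permutations
and sign changes. -/
structure IsSymmNorm (n : ℕ) (N : (Fin n → ℝ) → ℝ) : Prop where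
  add_le : ∀ x y, N (x + y) ≤ N x + N y
  smul : ∀ (c : ℝ) (x), N (c • x) = |c| * N x
  pos : ∀ x, x ≠ 0 → 0 < N x
  perm : ∀ (σ : Equiv.Perm (Fin n)) (x), N (x ∘ σ) = N x
  sign : ∀ (ε x : Fin n → ℝ), (∀ i, ε i = 1 ∨ ε i = -1) → N (ε * x) = N x

/-- Proposition 2.5: for every symmetric norm and `f ∈ [−1,1]ⁿ`, `I_{f+1}` is a
contraction on the hyperplane of vectors whose coordinates sum to zero. -/
lemma IsSymmNorm.zero {n N} (hN : IsSymmNorm n N) : N 0 = 0 := by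
  have := hN.smul 0 0
  simpa using this

lemma IsSymmNorm.sum_le {n N} (hN : IsSymmNorm n N) {ι : Type*} (s : Finset ι)
    (w : ι → ℝ) (v : ι → Fin n → ℝ) (hw : ∀ i, 0 ≤ w i) :
    N (∑ i ∈ s, w i • v i) ≤ ∑ i ∈ s, w i * N (v i) := by
  induction s using Finset.cons_induction with
  | empty => simp [hN.zero]
  | cons a s ha ih =>
    rw [Finset.sum_cons, Finset.sum_cons]
    refine le_trans (hN.add_le _ _) ?_
    have h := hN.smul (w a) (v a)
    rw [abs_of_nonneg (hw a)] at h
    linarith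

lemma permMatrix_mulVec (n : ℕ) (σ : Equiv.Perm (Fin n)) (x : Fin n → ℝ) :
    (σ.permMatrix ℝ).mulVec x = x ∘ σ := by
  ext i
  simp [Matrix.mulVec, dotProduct, Equiv.Perm.permMatrix, PEquiv.toMatrix_apply,
    Equiv.toPEquiv_apply]

lemma sign_case (n : ℕ) (hn : 0 < n) (N : (Fin n → ℝ) → ℝ) (hN : IsSymmNorm n N)
    (ε x : Fin n → ℝ) (hε : ∀ i, ε i = 1 ∨ ε i = -1) (hx : ∑ i, x i = 0) :
    N ((Imat n (ε + 1)).mulVec x) ≤ N x := by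
  classical
  have hn' : (n : ℝ) ≠ 0 := Nat.cast_ne_zero.2 hn.ne'
  set P : Finset (Fin n) := univ.filter (fun j => ε j = (1:ℝ)) with hP
  set p : ℝ := (P.card : ℝ) with hp
  set A : ℝ := ∑ j ∈ P, x j with hA
  -- cardinality of the complement
  have hcardsum : P.card + (univ.filter (fun j => ¬ ε j = (1:ℝ))).card = n := by
    rw [Finset.card_filter_add_card_filter_not]
    simp
  have hcardc : ((univ.filter (fun j => ¬ ε j = (1:ℝ))).card : ℝ) = (n : ℝ) - p := by
    have := hcardsum
    push_cast [← this]
    ring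
  -- sum of ε
  have hT : ∑ j, ε j = 2 * p - n := by
    rw [← Finset.sum_filter_add_sum_filter_not univ (fun j => ε j = (1:ℝ))]
    have h1 : ∑ j ∈ univ.filter (fun j => ε j = (1:ℝ)), ε j = p := by
      rw [Finset.sum_congr rfl (fun j hj => (mem_filter.1 hj).2)]
      simp [hp, hP]
    have h2 : ∑ j ∈ univ.filter (fun j => ¬ ε j = (1:ℝ)), ε j
        = -((n:ℝ) - p) := by
      rw [Finset.sum_congr rfl (fun j hj => show ε j = -1 by
        rcases hε j with h | h
        · exact absurd h (mem_filter.1 hj).2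
        · exact h)]
      rw [Finset.sum_const, ← hcardc]
      simp
    rw [h1, h2]; ring
  -- sum of ε * x
  have hAc : ∑ j ∈ univ.filter (fun j => ¬ ε j = (1:ℝ)), x j = -A := by
    have := Finset.sum_filter_add_sum_filter_not univ (fun j => ε j = (1:ℝ)) x
    rw [hx] at this
    rw [hA, hP]
    linarith [this]
  have hU : ∑ j, ε j * x j = 2 * A := by
    rw [← Finset.sum_filter_add_sum_filter_not univ (fun j => ε j = (1:ℝ))]
    have h1 : ∑ j ∈ univ.filter (fun j => ε j = (1:ℝ)), ε j * x j = A := by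
      rw [Finset.sum_congr rfl (fun j hj => by rw [(mem_filter.1 hj).2, one_mul])]
    have h2 : ∑ j ∈ univ.filter (fun j => ¬ ε j = (1:ℝ)), ε j * x j = A := by
      rw [Finset.sum_congr rfl (fun j hj => show ε j * x j = -x j by
        rcases hε j with h | h
        · exact absurd h (mem_filter.1 hj).2
        · rw [h]; ring)]
      rw [Finset.sum_neg_distrib, hAc]; ring
    rw [h1, h2]; ring
  -- the doubly stochastic matrix
  set M' : Matrix (Fin n) (Fin n) ℝ := fun i j =>
    if i = j then ((univ.filter (fun k => ε k = ε i)).card : ℝ) / n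
    else if ε i = ε j then 0 else 1 / n with hM'
  -- class cardinality
  have hclasscard : ∀ i, ((univ.filter (fun k => ε k = ε i)).card : ℝ)
      = if ε i = 1 then p else (n : ℝ) - p := by
    intro i
    rcases hε i with h | h <;> rw [h]
    · rw [if_pos rfl, hp, hP]
    · rw [if_neg (by norm_num)]
      rw [show univ.filter (fun k => ε k = (-1:ℝ)) = univ.filter (fun k => ¬ ε k = (1:ℝ)) from
        Finset.filter_congr (fun j _ => by
          rcases hε j with h' | h' <;> norm_num [h'])]
      exact hcardc
  -- class sum
  have hclasssum : ∀ i, ∑ j ∈ univ.filter (fun k => ε k = ε i), x j = ε i * A := by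
    intro i
    rcases hε i with h | h <;> rw [h]
    · rw [one_mul, hA, hP]
    · rw [show univ.filter (fun k => ε k = (-1:ℝ)) = univ.filter (fun k => ¬ ε k = (1:ℝ)) from
        Finset.filter_congr (fun j _ => by
          rcases hε j with h' | h' <;> norm_num [h'])]
      rw [hAc]; ring
  -- row sums are 1
  have hrow : ∀ i, ∑ j, M' i j = 1 := by
    intro i
    rw [← Finset.sum_erase_add _ _ (mem_univ i)]
    have hdiag : M' i i = ((univ.filter (fun k => ε k = ε i)).card : ℝ) / n := by
      simp [hM']
    have herase : ∑ j ∈ univ.erase i, M' i j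
        = ∑ j ∈ univ.erase i, (if ε i = ε j then 0 else 1 / (n:ℝ)) := by
      refine Finset.sum_congr rfl fun j hj => ?_
      rw [hM']
      exact if_neg (fun h => (mem_erase.1 hj).1 h.symm)
    have hfull : ∑ j ∈ univ.erase i, (if ε i = ε j then 0 else 1 / (n:ℝ))
        = ∑ j, (if ε i = ε j then 0 else 1 / (n:ℝ)) := by
      rw [Finset.sum_erase_eq_sub (mem_univ i), if_pos rfl, sub_zero]
    have hval : ∑ j, (if ε i = ε j then 0 else 1 / (n:ℝ))
        = ((univ.filter (fun j => ¬ ε i = ε j)).card : ℝ) / n := by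
      rw [Finset.sum_ite, Finset.sum_const, Finset.sum_const]
      simp [div_eq_mul_inv, mul_comm]
    have hcompl : ((univ.filter (fun j => ¬ ε i = ε j)).card : ℝ)
        = (n : ℝ) - ((univ.filter (fun k => ε k = ε i)).card : ℝ) := by
      have h1 : (univ.filter (fun j => ¬ ε i = ε j))
          = (univ.filter (fun j => ¬ ε j = ε i)) :=
        Finset.filter_congr (fun j _ => by rw [eq_comm])
      have h2 := Finset.card_filter_add_card_filter_not
        (s := (univ : Finset (Fin n))) (p := fun k => ε k = ε i)
      rw [Finset.card_univ, Fintype.card_fin] at h2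
      rw [h1]
      push_cast [← h2]
      ring
    rw [herase, hfull, hval, hdiag, hcompl]
    field_simp
    ring
  -- M' is symmetric
  have hsymm : ∀ i j, M' i j = M' j i := by
    intro i j
    by_cases h : i = j
    · rw [h]
    · rw [hM']
      simp only [if_neg h, if_neg (Ne.symm h)]
      by_cases h2 : ε i = ε j
      · rw [if_pos h2, if_pos h2.symm]
      · rw [if_neg h2, if_neg (fun h3 => h2 h3.symm)]
  have hds : M' ∈ doublyStochastic ℝ (Fin n) := by
    rw [mem_doublyStochastic_iff_sum]
    refine ⟨fun i j => ?_, hrow, fun j => ?_⟩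
    · simp only [hM']
      split_ifs
      · positivity
      · exact le_refl 0
      · positivity
    · rw [Finset.sum_congr rfl (fun i _ => hsymm i j)]
      exact hrow j
  -- key identity: I_{ε+1} x = (-ε) * (M' x)
  have hkey : (Imat n (ε + 1)).mulVec x = (-ε) * (M'.mulVec x) := by
    funext i
    have hoffsum : ∑ j ∈ univ.erase i, Theta n (ε + 1) i j * x j
        = (2 * A - (2 * ε i + 2) * x i) / (2 * n) := by
      have h1 : ∀ j ∈ univ.erase i, Theta n (ε + 1) i j * x j
          = ((ε i + ε j + 2) / (2 * (n:ℝ))) * x j := by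
        intro j hj
        have hij : ¬ i = j := fun h => (mem_erase.1 hj).1 h.symm
        unfold Theta
        rw [if_neg hij]
        simp only [Pi.add_apply, Pi.one_apply]
        ring_nf
      rw [Finset.sum_congr rfl h1, Finset.sum_erase_eq_sub (mem_univ i)]
      have h2 : ∑ j, ((ε i + ε j + 2) / (2 * (n:ℝ))) * x j
          = ((ε i + 2) * (∑ j, x j) + ∑ j, ε j * x j) / (2 * n) := by
        rw [Finset.mul_sum, ← Finset.sum_add_distrib, Finset.sum_div]
        exact Finset.sum_congr rfl fun j _ => by ring
      rw [h2, hx, hU]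
      ring
    have hdiag : Theta n (ε + 1) i i
        = -(((ε i + 2) * n + (2 * p - n) - (2 * ε i + 2)) / (2 * (n:ℝ))) := by
      unfold Theta
      rw [if_pos rfl]
      have h1 : ∀ k ∈ univ.erase i, ((ε + 1) i + (ε + 1) k) / (2 * (n:ℝ))
          = (ε i + ε k + 2) / (2 * (n:ℝ)) := by
        intro k _
        simp only [Pi.add_apply, Pi.one_apply]
        ring_nf
      rw [Finset.sum_congr rfl h1, Finset.sum_erase_eq_sub (mem_univ i)]
      have h2 : ∑ k, (ε i + ε k + 2) / (2 * (n:ℝ))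
          = ((ε i + 2) * n + (2 * p - n)) / (2 * n) := by
        rw [← Finset.sum_div]
        congr 1
        calc ∑ k, (ε i + ε k + 2) = ∑ k : Fin n, ((ε i + 2) + ε k) :=
              Finset.sum_congr rfl fun k _ => by ring
          _ = (∑ _k : Fin n, (ε i + 2)) + ∑ k, ε k := Finset.sum_add_distrib
          _ = (ε i + 2) * n + (2 * p - n) := by
              rw [Finset.sum_const, hT, Finset.card_univ, Fintype.card_fin, nsmul_eq_mul]
              ring
      rw [h2]
      ring
    have hLHS : (Imat n (ε + 1)).mulVec x i
        = x i + ((2 * A - (2 * ε i + 2) * x i) / (2 * n)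
          + (-(((ε i + 2) * n + (2 * p - n) - (2 * ε i + 2)) / (2 * (n:ℝ)))) * x i) := by
      unfold Imat
      rw [Matrix.add_mulVec, Matrix.one_mulVec]
      simp only [Pi.add_apply]
      congr 1
      rw [show (Theta n (ε + 1)).mulVec x i = ∑ j, Theta n (ε + 1) i j * x j from rfl]
      rw [← Finset.sum_erase_add _ _ (mem_univ i), hoffsum, hdiag]
    have hcross : ∑ j ∈ univ.erase i, M' i j * x j = -(ε i * A) / n := by
      have h1 : ∀ j ∈ univ.erase i, M' i j * x j
          = (if ε i = ε j then 0 else 1 / (n:ℝ)) * x j := by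
        intro j hj
        simp only [hM']
        rw [if_neg (fun h => (mem_erase.1 hj).1 h.symm)]
      rw [Finset.sum_congr rfl h1, Finset.sum_erase_eq_sub (mem_univ i), if_pos rfl, zero_mul,
        sub_zero, ← Finset.sum_filter_add_sum_filter_not univ (fun j => ε i = ε j)]
      have h2 : ∑ j ∈ univ.filter (fun j => ε i = ε j),
          (if ε i = ε j then 0 else 1 / (n:ℝ)) * x j = 0 :=
        Finset.sum_eq_zero fun j hj => by rw [if_pos (mem_filter.1 hj).2, zero_mul]
      have h3 : ∑ j ∈ univ.filter (fun j => ¬ ε i = ε j),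
          (if ε i = ε j then 0 else 1 / (n:ℝ)) * x j
          = (∑ j ∈ univ.filter (fun j => ¬ ε i = ε j), x j) / n := by
        rw [Finset.sum_div]
        exact Finset.sum_congr rfl fun j hj => by rw [if_neg (mem_filter.1 hj).2]; ring
      have h4 : ∑ j ∈ univ.filter (fun j => ¬ ε i = ε j), x j = -(ε i * A) := by
        have h5 : univ.filter (fun j => ¬ ε i = ε j) = univ.filter (fun j => ¬ ε j = ε i) :=
          Finset.filter_congr fun j _ => by rw [eq_comm]
        have h6 := Finset.sum_filter_add_sum_filter_not univ (fun j => ε j = ε i) x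
        rw [hx] at h6
        rw [h5]
        have h7 := hclasssum i
        linarith [h6, h7]
      rw [h2, h3, h4, zero_add]
    have hMxi : M'.mulVec x i
        = ((if ε i = 1 then p else (n:ℝ) - p) / n) * x i + -(ε i * A) / n := by
      rw [show M'.mulVec x i = ∑ j, M' i j * x j from rfl,
        ← Finset.sum_erase_add _ _ (mem_univ i), hcross]
      have hdM : M' i i = (if ε i = 1 then p else (n:ℝ) - p) / n := by
        simp only [hM', if_pos rfl]
        rw [hclasscard i]
      rw [hdM]
      ring
    rw [hLHS, show ((-ε) * M'.mulVec x) i = (-ε i) * (M'.mulVec x i) from rfl, hMxi]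
    rcases hε i with h | h
    · rw [h, if_pos rfl]
      field_simp
      ring
    · rw [h, if_neg (by norm_num)]
      field_simp
      ring
  -- Birkhoff decomposition
  obtain ⟨w, hw0, hw1, hwM⟩ := exists_eq_sum_perm_of_mem_doublyStochastic hds
  have hmv : M'.mulVec x = ∑ σ : Equiv.Perm (Fin n), w σ • (x ∘ σ) := by
    rw [← hwM]
    ext i
    rw [show ((∑ σ : Equiv.Perm (Fin n), w σ • σ.permMatrix ℝ).mulVec x) i
        = ∑ j, (∑ σ : Equiv.Perm (Fin n), w σ • σ.permMatrix ℝ) i j * x j from rfl]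
    simp only [Matrix.sum_apply, Matrix.smul_apply, smul_eq_mul, Finset.sum_apply,
      Pi.smul_apply]
    simp only [Finset.sum_mul]
    rw [Finset.sum_comm]
    refine Finset.sum_congr rfl fun σ _ => ?_
    rw [show (x ∘ σ) i = ((σ.permMatrix ℝ).mulVec x) i from by rw [permMatrix_mulVec],
      show ((σ.permMatrix ℝ).mulVec x) i = ∑ j, (σ.permMatrix ℝ) i j * x j from rfl,
      Finset.mul_sum]
    exact Finset.sum_congr rfl fun j _ => by ring
  have hsign : N ((-ε) * (M'.mulVec x)) = N (M'.mulVec x) := by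
    refine hN.sign (-ε) _ (fun i => ?_)
    rcases hε i with h | h
    · right; simp [h]
    · left; simp [h]
  rw [hkey, hsign, hmv]
  calc N (∑ σ : Equiv.Perm (Fin n), w σ • (x ∘ σ))
      ≤ ∑ σ : Equiv.Perm (Fin n), w σ * N (x ∘ σ) := hN.sum_le univ w _ hw0
    _ = ∑ σ : Equiv.Perm (Fin n), w σ * N x :=
        Finset.sum_congr rfl fun σ _ => by rw [hN.perm]
    _ = N x := by rw [← Finset.sum_mul, hw1, one_mul]

lemma imat_affine (n : ℕ) (θ : ℝ) (f₁ f₂ : Fin n → ℝ) :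
    Imat n ((fun i => θ * f₁ i + (1 - θ) * f₂ i) + 1)
      = θ • Imat n (f₁ + 1) + (1 - θ) • Imat n (f₂ + 1) := by
  unfold Imat
  ext i j
  simp only [Matrix.add_apply, Matrix.smul_apply, Matrix.one_apply, Pi.add_apply, Pi.one_apply,
    smul_eq_mul]
  unfold Theta
  simp only [Pi.add_apply, Pi.one_apply]
  have key : ∀ S : Finset (Fin n),
      ∑ k ∈ S, ((θ * f₁ i + (1 - θ) * f₂ i + 1) + (θ * f₁ k + (1 - θ) * f₂ k + 1)) / (2 * n)
        = θ * ∑ k ∈ S, ((f₁ i + 1) + (f₁ k + 1)) / (2 * n)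
          + (1 - θ) * ∑ k ∈ S, ((f₂ i + 1) + (f₂ k + 1)) / (2 * n) := by
    intro S
    rw [Finset.mul_sum, Finset.mul_sum, ← Finset.sum_add_distrib]
    exact Finset.sum_congr rfl fun k _ => by ring
  split_ifs with h
  · rw [key (Finset.univ.erase i)]; ring
  · rw [show (θ * f₁ i + (1 - θ) * f₂ i + 1) + (θ * f₁ j + (1 - θ) * f₂ j + 1)
        = θ * ((f₁ i + 1) + (f₁ j + 1)) + (1 - θ) * ((f₂ i + 1) + (f₂ j + 1)) by ring]
    ring

theorem stmt_6 (n : ℕ) (hn : 0 < n) (N : (Fin n → ℝ) → ℝ) (hN : IsSymmNorm n N)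
    (f x : Fin n → ℝ) (hf : ∀ i, f i ∈ Set.Icc (-1 : ℝ) 1) (hx : ∑ i, x i = 0) :
    N ((Imat n (f + 1)).mulVec x) ≤ N x := by
  classical
  have key : ∀ s : Finset (Fin n), ∀ g : Fin n → ℝ, (∀ i, g i ∈ Set.Icc (-1 : ℝ) 1) →
      (∀ i ∉ s, g i = 1 ∨ g i = -1) → N ((Imat n (g + 1)).mulVec x) ≤ N x := by
    intro s
    induction s using Finset.induction_on with
    | empty =>
      intro g _ hg2
      exact sign_case n hn N hN g x (fun i => hg2 i (Finset.notMem_empty i)) hx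
    | @insert a s ha ih =>
      intro g hg1 hg2
      set θ : ℝ := (g a + 1) / 2 with hθ
      obtain ⟨hga1, hga2⟩ := hg1 a
      have hθ0 : 0 ≤ θ := by rw [hθ]; linarith
      have hθ1 : θ ≤ 1 := by rw [hθ]; linarith
      set g₁ : Fin n → ℝ := Function.update g a 1 with hg₁
      set g₂ : Fin n → ℝ := Function.update g a (-1) with hg₂
      have hcomb : g = fun i => θ * g₁ i + (1 - θ) * g₂ i := by
        funext i
        by_cases h : i = a
        · subst h
          rw [hg₁, hg₂, Function.update_self, Function.update_self, hθ]
          ring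
        · rw [hg₁, hg₂, Function.update_of_ne h, Function.update_of_ne h]
          ring
      have h1 : N ((Imat n (g₁ + 1)).mulVec x) ≤ N x := by
        refine ih g₁ (fun i => ?_) (fun i hi => ?_)
        · by_cases h : i = a
          · subst h; rw [hg₁, Function.update_self]; constructor <;> norm_num
          · rw [hg₁, Function.update_of_ne h]; exact hg1 i
        · by_cases h : i = a
          · subst h; left; rw [hg₁, Function.update_self]
          · rw [hg₁, Function.update_of_ne h]
            exact hg2 i (fun hmem => by
              rcases Finset.mem_insert.1 hmem with h' | h'
              · exact h h'
              · exact hi h')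
      have h2 : N ((Imat n (g₂ + 1)).mulVec x) ≤ N x := by
        refine ih g₂ (fun i => ?_) (fun i hi => ?_)
        · by_cases h : i = a
          · subst h; rw [hg₂, Function.update_self]; constructor <;> norm_num
          · rw [hg₂, Function.update_of_ne h]; exact hg1 i
        · by_cases h : i = a
          · subst h; right; rw [hg₂, Function.update_self]
          · rw [hg₂, Function.update_of_ne h]
            exact hg2 i (fun hmem => by
              rcases Finset.mem_insert.1 hmem with h' | h'
              · exact h h'
              · exact hi h')
      calc N ((Imat n (g + 1)).mulVec x)
          = N ((θ • Imat n (g₁ + 1) + (1 - θ) • Imat n (g₂ + 1)).mulVec x) := by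
            rw [hcomb, imat_affine]
        _ = N (θ • (Imat n (g₁ + 1)).mulVec x + (1 - θ) • (Imat n (g₂ + 1)).mulVec x) := by
            rw [Matrix.add_mulVec, Matrix.smul_mulVec, Matrix.smul_mulVec]
        _ ≤ N (θ • (Imat n (g₁ + 1)).mulVec x) + N ((1 - θ) • (Imat n (g₂ + 1)).mulVec x) :=
            hN.add_le _ _
        _ = θ * N ((Imat n (g₁ + 1)).mulVec x) + (1 - θ) * N ((Imat n (g₂ + 1)).mulVec x) := by
            rw [hN.smul, hN.smul, abs_of_nonneg hθ0, abs_of_nonneg (by linarith : (0:ℝ) ≤ 1 - θ)]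
        _ ≤ θ * N x + (1 - θ) * N x := by
            have hNx1 := h1; have hNx2 := h2
            have := mul_le_mul_of_nonneg_left h1 hθ0
            have := mul_le_mul_of_nonneg_left h2 (by linarith : (0:ℝ) ≤ 1 - θ)
            linarith
        _ = N x := by ring
  exact key Finset.univ f hf (fun i hi => absurd (Finset.mem_univ i) hi)
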